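/- For nonnegative integers n and k with k ≥ 1 (so that all terms are integers), the following identity holds: Σ_{p=1}^{⌈(n+1)/2⌉} Σ_{q=1}^{min(n+3−2p, k+1−i)} ((−1)^{q−p}·2^{n−p}/((n+3−2p−q)!·(p−1)!)) · binom(k−i, q−1) · (2n+4k−2p−2q+1−i)!!/(4k−3−i)!! = 2^{n−1}·binom(n+3k−2, n), for every integer i with 0 ≤ i ≤ k. -/

import Mathlib

open Nat Finset

/-- coefficient in the Hermite-type expansion -/
def gQ (N w : ℕ) : ℚ := (-1) ^ w * (N.choose (2 * w)) * (((2 * w - 1)‼ : ℕ) : ℚ)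

lemma gQ_zero {N w : ℕ} (h : N < 2 * w) : gQ N w = 0 := by
  simp [gQ, Nat.choose_eq_zero_of_lt h]

lemma gQ_zv (N : ℕ) : gQ N 0 = 1 := by simp [gQ]

lemma dfac_odd_succ (w : ℕ) : (2 * w + 1)‼ = (2 * w + 1) * (2 * w - 1)‼ := by
  cases w with
  | zero => rfl
  | succ m =>
    have h1 : 2 * (m + 1) + 1 = (2 * m + 1) + 2 := by ring
    have h2 : 2 * (m + 1) - 1 = 2 * m + 1 := by omega
    rw [h1, h2, Nat.doubleFactorial_add_two]

lemma fac_two_mul (w : ℕ) : (2 * w)! = 2 ^ w * w ! * (2 * w - 1)‼ := by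
  cases w with
  | zero => rfl
  | succ m =>
    have h1 : 2 * (m + 1) = (2 * m + 1) + 1 := by ring
    have h3 : 2 * (m + 1) - 1 = 2 * m + 1 := by omega
    rw [h3, h1, Nat.factorial_eq_mul_doubleFactorial, ← h1, Nat.doubleFactorial_two_mul]

lemma key_fac {N w : ℕ} (h : 2 * w ≤ N) :
    N ! = N.choose (2 * w) * (2 * w - 1)‼ * ((N - 2 * w)! * (w ! * 2 ^ w)) := by
  have h1 := Nat.choose_mul_factorial_mul_factorial h
  rw [← h1, fac_two_mul]
  ring

lemma coeff_rec (N w : ℕ) :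
    gQ (N + 1) (w + 1) = gQ N (w + 1) - ((N : ℚ) - 2 * w) * gQ N w := by
  have key : ((N.choose (2 * w + 1) : ℕ) : ℚ) * (((2 * w + 1)‼ : ℕ) : ℚ)
      = ((N : ℚ) - 2 * w) * (N.choose (2 * w)) * (((2 * w - 1)‼ : ℕ) : ℚ) := by
    rw [dfac_odd_succ]
    have h2 : ((N.choose (2 * w + 1) : ℕ) : ℚ) * (2 * w + 1)
        = ((N : ℚ) - 2 * w) * (N.choose (2 * w)) := by
      by_cases h : 2 * w ≤ N
      · have := Nat.choose_succ_right_eq N (2 * w)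
        have hc : ((N.choose (2 * w + 1) * (2 * w + 1) : ℕ) : ℚ)
            = ((N.choose (2 * w) * (N - 2 * w) : ℕ) : ℚ) := by exact_mod_cast this
        push_cast [Nat.cast_sub h] at hc
        push_cast
        linarith [hc]
      · rw [Nat.choose_eq_zero_of_lt (by omega : N < 2 * w),
          Nat.choose_eq_zero_of_lt (by omega : N < 2 * w + 1)]
        push_cast
        ring
    push_cast
    push_cast at h2
    nlinarith [h2]
  unfold gQ
  have hp : 2 * (w + 1) = (2 * w + 1) + 1 := by ring
  rw [hp, Nat.choose_succ_succ N (2 * w + 1)]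
  have h3 : 2 * (w + 1) - 1 = 2 * w + 1 := by omega
  rw [show (2*w+1+1) - 1 = 2*w+1 by omega]
  push_cast
  push_cast at key
  linear_combination (-(-1:ℚ)^w) * key

lemma lemA (N : ℕ) (u : ℚ) :
    ∑ w ∈ range (N + 1), gQ N w * ∏ j ∈ range (N - w), (u + 2 * j) =
      ∏ t ∈ range N, (u + t) := by
  induction N with
  | zero => simp [gQ]
  | succ N ih =>
    rw [Finset.sum_range_succ']
    simp only [Nat.succ_sub_succ, Nat.sub_zero]
    have h0 : gQ (N + 1) 0 = 1 := by simp [gQ]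
    rw [h0, one_mul]
    have step1 : ∀ w ∈ range (N + 1),
        gQ (N + 1) (w + 1) * ∏ j ∈ range (N - w), (u + 2 * j)
        = gQ N (w + 1) * ∏ j ∈ range (N - w), (u + 2 * j)
          - ((N : ℚ) - 2 * w) * (gQ N w * ∏ j ∈ range (N - w), (u + 2 * j)) := by
      intro w _
      rw [coeff_rec]; ring
    have pack : (∑ w ∈ range (N + 1), gQ N (w + 1) * ∏ j ∈ range (N - w), (u + 2 * j))
        + ∏ j ∈ range (N + 1), (u + 2 * j)
        = ∑ w ∈ range (N + 2), gQ N w * ∏ j ∈ range (N + 1 - w), (u + 2 * j) := by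
      conv_rhs => rw [Finset.sum_range_succ']
      simp only [Nat.succ_sub_succ, Nat.sub_zero]
      have : gQ N 0 = 1 := by simp [gQ]
      rw [this, one_mul]
    have drop : ∑ w ∈ range (N + 2), gQ N w * ∏ j ∈ range (N + 1 - w), (u + 2 * j)
        = ∑ w ∈ range (N + 1), gQ N w * ∏ j ∈ range (N + 1 - w), (u + 2 * j) := by
      rw [Finset.sum_range_succ, gQ_zero (by omega), zero_mul, add_zero]
    have expand : ∀ w ∈ range (N + 1),
        gQ N w * ∏ j ∈ range (N + 1 - w), (u + 2 * j)
        = gQ N w * (∏ j ∈ range (N - w), (u + 2 * j)) * (u + 2 * ((N : ℚ) - w)) := by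
      intro w hw
      rw [mem_range] at hw
      have h1 : N + 1 - w = (N - w) + 1 := by omega
      rw [h1, Finset.prod_range_succ]
      have h2 : ((N - w : ℕ) : ℚ) = (N : ℚ) - w := by
        push_cast [Nat.cast_sub (by omega : w ≤ N)]; ring
      rw [h2]; ring
    have final : ∑ w ∈ range (N + 1), gQ N (w + 1) * ∏ j ∈ range (N - w), (u + 2 * j)
        + ∏ j ∈ range (N + 1), (u + 2 * j)
        - ∑ w ∈ range (N + 1), ((N : ℚ) - 2 * w) * (gQ N w * ∏ j ∈ range (N - w), (u + 2 * j))
        = ∑ w ∈ range (N + 1), (u + (N : ℚ)) * (gQ N w * ∏ j ∈ range (N - w), (u + 2 * j)) := by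
      rw [pack, drop, Finset.sum_congr rfl expand, ← Finset.sum_sub_distrib]
      apply Finset.sum_congr rfl
      intro w hw
      ring
    calc ∑ w ∈ range (N + 1), gQ (N + 1) (w + 1) * ∏ j ∈ range (N - w), (u + 2 * j)
          + ∏ j ∈ range (N + 1), (u + 2 * j)
        = ∑ w ∈ range (N + 1), (u + (N : ℚ)) * (gQ N w * ∏ j ∈ range (N - w), (u + 2 * j)) := by
          rw [Finset.sum_congr rfl step1, Finset.sum_sub_distrib]
          linarith [final]
      _ = (u + (N : ℚ)) * ∑ w ∈ range (N + 1), gQ N w * ∏ j ∈ range (N - w), (u + 2 * j) := by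
          rw [Finset.mul_sum]
      _ = ∏ t ∈ range (N + 1), (u + t) := by
          rw [ih, Finset.prod_range_succ]; ring

lemma lemB (x : ℕ) : ∀ n d : ℕ,
    ∑ u ∈ range (n + 1), (-1 : ℚ) ^ u * (x.choose u) * ((d + x + n - u).choose (n - u))
      = ((d + n).choose n : ℕ) := by
  induction x with
  | zero =>
    intro n d
    rw [Finset.sum_eq_single 0]
    · simp
    · intro b _ hb0
      obtain ⟨c, rfl⟩ := Nat.exists_eq_succ_of_ne_zero hb0
      simp
    · intro h; simp at h
  | succ x ih =>
    intro n d
    cases n with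
    | zero => simp
    | succ m =>
      rw [Finset.sum_range_succ']
      have hterm : ∀ u ∈ range (m + 1),
          (-1 : ℚ) ^ (u + 1) * ((x + 1).choose (u + 1)) *
              ((d + (x + 1) + (m + 1) - (u + 1)).choose ((m + 1) - (u + 1)))
          = (-1 : ℚ) ^ (u + 1) * (x.choose (u + 1)) *
              ((d + 1 + x + (m + 1) - (u + 1)).choose ((m + 1) - (u + 1)))
            - (-1 : ℚ) ^ u * (x.choose u) * ((d + 1 + x + m - u).choose (m - u)) := by
        intro u hu
        rw [mem_range] at hu
        have e3 : (m + 1) - (u + 1) = m - u := by omega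
        have e2 : d + (x + 1) + (m + 1) - (u + 1) = d + 1 + x + m - u := by omega
        have e1 : d + 1 + x + (m + 1) - (u + 1) = d + 1 + x + m - u := by omega
        rw [Nat.choose_succ_succ x u, e3, e2, e1]
        push_cast
        ring
      rw [Finset.sum_congr rfl hterm, Finset.sum_sub_distrib]
      have hih1 := ih (m + 1) (d + 1)
      rw [Finset.sum_range_succ'] at hih1
      have e4 : d + 1 + x + (m + 1) - 0 = d + (x + 1) + (m + 1) - 0 := by omega
      rw [e4] at hih1
      rw [show (((x+1).choose 0 : ℕ) : ℚ) = ((x.choose 0 : ℕ) : ℚ) by simp] at *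
      have hih2 := ih m (d + 1)
      have pasc : (d + 1 + m + 1).choose (m + 1)
          = (d + 1 + m).choose m + (d + 1 + m).choose (m + 1) :=
        Nat.choose_succ_succ (d + 1 + m) m
      have e5 : d + 1 + m = d + (m + 1) := by omega
      rw [e5] at pasc
      have e7 : d + (m + 1) + 1 = d + 1 + (m + 1) := by omega
      rw [e7] at pasc
      have pascq : ((d + 1 + (m + 1)).choose (m + 1) : ℚ)
          = ((d + (m + 1)).choose m : ℚ) + ((d + (m + 1)).choose (m + 1) : ℚ) := by
        exact_mod_cast congrArg (Nat.cast : ℕ → ℚ) pasc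
      have e6 : ((d + (m+1)).choose m : ℚ) = ((d + 1 + m).choose m : ℚ) := by rw [e5]
      linarith [hih1, hih2, pascq, e6]

lemma prod_cast_choose (c m : ℕ) :
    ∏ j ∈ range m, ((c : ℚ) + 1 + j) = (((c + m).choose m : ℕ) : ℚ) * ((m ! : ℕ) : ℚ) := by
  induction m with
  | zero => simp
  | succ m ih =>
    rw [Finset.prod_range_succ, ih]
    have h := Nat.add_one_mul_choose_eq (c + m) m
    have hq : ((c : ℚ) + m + 1) * ((c + m).choose m : ℕ)
        = (((c + m + 1).choose (m + 1) : ℕ) : ℚ) * (m + 1) := by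
      exact_mod_cast congrArg (Nat.cast : ℕ → ℚ) h
    have e1 : c + (m + 1) = c + m + 1 := by omega
    rw [e1, Nat.factorial_succ]
    push_cast
    push_cast at hq
    linear_combination ((m ! : ℕ) : ℚ) * hq

lemma dfac_prod (a m : ℕ) :
    (a + 2 * m)‼ = a‼ * ∏ j ∈ range m, (a + 2 * (j + 1)) := by
  induction m with
  | zero => simp
  | succ m ih =>
    have h1 : a + 2 * (m + 1) = (a + 2 * m) + 2 := by ring
    rw [h1, Nat.doubleFactorial_add_two, ih, Finset.prod_range_succ]
    ring

theorem stmt12 (n k i : ℕ) (hk : 1 ≤ k) (hi : i ≤ k) :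
    ∑ p ∈ Finset.Icc 1 ((n + 2) / 2),
      ∑ q ∈ Finset.Icc 1 (min (n + 3 - 2 * p) (k + 1 - i)),
        (-1 : ℚ) ^ (q + p) * (2 : ℚ) ^ ((n : ℤ) - (p : ℤ)) /
            ((((n + 3 - 2 * p - q)! : ℕ) : ℚ) * (((p - 1)! : ℕ) : ℚ)) *
          (((k - i).choose (q - 1) : ℕ) : ℚ) *
          ((((2 * n + 4 * k + 1 - 2 * p - 2 * q - i)‼ : ℕ) : ℚ) /
            (((4 * k - 3 - i)‼ : ℕ) : ℚ)) =
      (2 : ℚ) ^ ((n : ℤ) - 1) * (((n + 3 * k - 2).choose n : ℕ) : ℚ) := by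
  -- Step 1/2: extend the inner range, then express it as an `if` over `Icc 1 (n+1)`
  have hu : ∀ p ∈ Finset.Icc 1 ((n + 2) / 2),
      (∑ q ∈ Finset.Icc 1 (min (n + 3 - 2 * p) (k + 1 - i)),
        (-1 : ℚ) ^ (q + p) * (2 : ℚ) ^ ((n : ℤ) - (p : ℤ)) /
            ((((n + 3 - 2 * p - q)! : ℕ) : ℚ) * (((p - 1)! : ℕ) : ℚ)) *
          (((k - i).choose (q - 1) : ℕ) : ℚ) *
          ((((2 * n + 4 * k + 1 - 2 * p - 2 * q - i)‼ : ℕ) : ℚ) /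
            (((4 * k - 3 - i)‼ : ℕ) : ℚ)))
      = ∑ q ∈ Finset.Icc 1 (n + 1),
          if q ≤ n + 3 - 2 * p then
            (-1 : ℚ) ^ (q + p) * (2 : ℚ) ^ ((n : ℤ) - (p : ℤ)) /
              ((((n + 3 - 2 * p - q)! : ℕ) : ℚ) * (((p - 1)! : ℕ) : ℚ)) *
            (((k - i).choose (q - 1) : ℕ) : ℚ) *
            ((((2 * n + 4 * k + 1 - 2 * p - 2 * q - i)‼ : ℕ) : ℚ) /
              (((4 * k - 3 - i)‼ : ℕ) : ℚ))
          else 0 := by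
    intro p hp
    rw [mem_Icc] at hp
    have h1 : (∑ q ∈ Finset.Icc 1 (min (n + 3 - 2 * p) (k + 1 - i)),
        (-1 : ℚ) ^ (q + p) * (2 : ℚ) ^ ((n : ℤ) - (p : ℤ)) /
            ((((n + 3 - 2 * p - q)! : ℕ) : ℚ) * (((p - 1)! : ℕ) : ℚ)) *
          (((k - i).choose (q - 1) : ℕ) : ℚ) *
          ((((2 * n + 4 * k + 1 - 2 * p - 2 * q - i)‼ : ℕ) : ℚ) /
            (((4 * k - 3 - i)‼ : ℕ) : ℚ)))
        = ∑ q ∈ Finset.Icc 1 (n + 3 - 2 * p),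
          (-1 : ℚ) ^ (q + p) * (2 : ℚ) ^ ((n : ℤ) - (p : ℤ)) /
            ((((n + 3 - 2 * p - q)! : ℕ) : ℚ) * (((p - 1)! : ℕ) : ℚ)) *
          (((k - i).choose (q - 1) : ℕ) : ℚ) *
          ((((2 * n + 4 * k + 1 - 2 * p - 2 * q - i)‼ : ℕ) : ℚ) /
            (((4 * k - 3 - i)‼ : ℕ) : ℚ)) := by
      apply Finset.sum_subset (Finset.Icc_subset_Icc_right (min_le_left _ _))
      intro q hq hnq
      rw [mem_Icc] at hq
      simp only [mem_Icc, not_and, not_le] at hnq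
      have hlt : k - i < q - 1 := by omega
      rw [Nat.choose_eq_zero_of_lt hlt]
      simp
    rw [h1]
    have h2 : Finset.Icc 1 (n + 3 - 2 * p)
        = (Finset.Icc 1 (n + 1)).filter (fun q => q ≤ n + 3 - 2 * p) := by
      ext q
      simp only [mem_Icc, mem_filter]
      omega
    rw [h2, Finset.sum_filter]
  rw [Finset.sum_congr rfl hu, Finset.sum_comm]
  -- Step 4: evaluate the inner sum over p for each fixed q
  have inner : ∀ q ∈ Finset.Icc 1 (n + 1),
      (∑ p ∈ Finset.Icc 1 ((n + 2) / 2),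
        if q ≤ n + 3 - 2 * p then
          (-1 : ℚ) ^ (q + p) * (2 : ℚ) ^ ((n : ℤ) - (p : ℤ)) /
            ((((n + 3 - 2 * p - q)! : ℕ) : ℚ) * (((p - 1)! : ℕ) : ℚ)) *
          (((k - i).choose (q - 1) : ℕ) : ℚ) *
          ((((2 * n + 4 * k + 1 - 2 * p - 2 * q - i)‼ : ℕ) : ℚ) /
            (((4 * k - 3 - i)‼ : ℕ) : ℚ))
        else 0)
      = (((k - i).choose (q - 1) : ℕ) : ℚ) *
          ((-1 : ℚ) ^ (q + 1) * (2 : ℚ) ^ n / 2 / (((n + 1 - q)! : ℕ) : ℚ)) *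
          ∏ t ∈ range (n + 1 - q), (4 * (k : ℚ) - i - 1 + t) := by
    intro q hq
    rw [mem_Icc] at hq
    obtain ⟨hq1, hq2⟩ := hq
    rw [show Finset.Icc 1 ((n + 2) / 2) = Finset.Ico 1 ((n + 2) / 2 + 1) from by
      rw [Finset.Ico_add_one_right_eq_Icc]]
    rw [Finset.sum_Ico_eq_sum_range]
    rw [show (n + 2) / 2 + 1 - 1 = (n + 2) / 2 from by omega]
    have hpoint : ∀ w ∈ range ((n + 2) / 2),
        (if q ≤ n + 3 - 2 * (1 + w) then
          (-1 : ℚ) ^ (q + (1 + w)) * (2 : ℚ) ^ ((n : ℤ) - ((1 + w : ℕ) : ℤ)) /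
            ((((n + 3 - 2 * (1 + w) - q)! : ℕ) : ℚ) * ((((1 + w) - 1)! : ℕ) : ℚ)) *
          (((k - i).choose (q - 1) : ℕ) : ℚ) *
          ((((2 * n + 4 * k + 1 - 2 * (1 + w) - 2 * q - i)‼ : ℕ) : ℚ) /
            (((4 * k - 3 - i)‼ : ℕ) : ℚ))
        else 0)
        = (((k - i).choose (q - 1) : ℕ) : ℚ) *
            ((-1 : ℚ) ^ (q + 1) * (2 : ℚ) ^ n / 2 / (((n + 1 - q)! : ℕ) : ℚ)) *
            (gQ (n + 1 - q) w *
              ∏ j ∈ range (n + 1 - q - w), (4 * (k : ℚ) - i - 1 + 2 * j)) := by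
      intro w hw
      rw [mem_range] at hw
      by_cases hc : q ≤ n + 3 - 2 * (1 + w)
      · rw [if_pos hc]
        have hc' : q + 2 * w ≤ n + 1 := by omega
        have e4 : 2 * w ≤ n + 1 - q := by omega
        rw [show n + 3 - 2 * (1 + w) - q = n + 1 - q - 2 * w from by omega]
        rw [show (1 + w) - 1 = w from by omega]
        rw [show 2 * n + 4 * k + 1 - 2 * (1 + w) - 2 * q - i
              = (4 * k - 3 - i) + 2 * (n + 1 - q - w) from by omega]
        rw [dfac_prod]
        have ha : (((4 * k - 3 - i)‼ : ℕ) : ℚ) ≠ 0 := by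
          exact_mod_cast (Nat.doubleFactorial_pos _).ne'
        have hratio : ((((4 * k - 3 - i)‼ *
              ∏ j ∈ range (n + 1 - q - w), ((4 * k - 3 - i) + 2 * (j + 1)) : ℕ)) : ℚ) /
              (((4 * k - 3 - i)‼ : ℕ) : ℚ)
            = ∏ j ∈ range (n + 1 - q - w), (4 * (k : ℚ) - i - 1 + 2 * j) := by
          push_cast
          rw [mul_div_cancel_left₀ _ ha]
          apply Finset.prod_congr rfl
          intro j _
          push_cast [Nat.cast_sub (show 3 ≤ 4 * k by omega),
            Nat.cast_sub (show i ≤ 4 * k - 3 by omega)]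
          ring
        rw [hratio]
        have hfacq : (((n + 1 - q)! : ℕ) : ℚ)
            = ((n + 1 - q).choose (2 * w) : ℚ) * (((2 * w - 1)‼ : ℕ) : ℚ) *
              ((((n + 1 - q - 2 * w)! : ℕ) : ℚ) * (((w ! : ℕ) : ℚ) * 2 ^ w)) := by
          exact_mod_cast congrArg (Nat.cast : ℕ → ℚ) (key_fac e4)
        have scal : (-1 : ℚ) ^ (q + (1 + w)) * (2 : ℚ) ^ ((n : ℤ) - ((1 + w : ℕ) : ℤ)) /
              ((((n + 1 - q - 2 * w)! : ℕ) : ℚ) * ((w ! : ℕ) : ℚ))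
            = (-1 : ℚ) ^ (q + 1) * (2 : ℚ) ^ n / 2 / (((n + 1 - q)! : ℕ) : ℚ) * gQ (n + 1 - q) w := by
          unfold gQ
          rw [zpow_sub₀ (by norm_num : (2 : ℚ) ≠ 0), zpow_natCast, zpow_natCast]
          rw [hfacq]
          have h1 : (((n + 1 - q - 2 * w)! : ℕ) : ℚ) ≠ 0 := by
            exact_mod_cast (Nat.factorial_pos _).ne'
          have h2 : ((w ! : ℕ) : ℚ) ≠ 0 := by exact_mod_cast (Nat.factorial_pos _).ne'
          have h3 : ((n + 1 - q).choose (2 * w) : ℚ) ≠ 0 := by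
            exact_mod_cast (Nat.choose_pos e4).ne'
          have h4 : (((2 * w - 1)‼ : ℕ) : ℚ) ≠ 0 := by
            exact_mod_cast (Nat.doubleFactorial_pos _).ne'
          have h5 : (2 : ℚ) ^ (1 + w) ≠ 0 := by positivity
          push_cast
          field_simp
          ring
        rw [scal]
        ring
      · rw [if_neg hc]
        rw [gQ_zero (show n + 1 - q < 2 * w from by omega)]
        ring
    rw [Finset.sum_congr rfl hpoint]
    -- extend / shrink the range of w
    have hzero : ∀ w : ℕ, n + 1 - q < 2 * w →
        (((k - i).choose (q - 1) : ℕ) : ℚ) *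
            ((-1 : ℚ) ^ (q + 1) * (2 : ℚ) ^ n / 2 / (((n + 1 - q)! : ℕ) : ℚ)) *
            (gQ (n + 1 - q) w *
              ∏ j ∈ range (n + 1 - q - w), (4 * (k : ℚ) - i - 1 + 2 * j)) = 0 := by
      intro w hw
      rw [gQ_zero hw]
      ring
    have key : ∀ M : ℕ, (n + 1 - q) / 2 + 1 ≤ M →
        (∑ w ∈ range ((n + 1 - q) / 2 + 1),
          (((k - i).choose (q - 1) : ℕ) : ℚ) *
            ((-1 : ℚ) ^ (q + 1) * (2 : ℚ) ^ n / 2 / (((n + 1 - q)! : ℕ) : ℚ)) *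
            (gQ (n + 1 - q) w *
              ∏ j ∈ range (n + 1 - q - w), (4 * (k : ℚ) - i - 1 + 2 * j)))
        = ∑ w ∈ range M,
          (((k - i).choose (q - 1) : ℕ) : ℚ) *
            ((-1 : ℚ) ^ (q + 1) * (2 : ℚ) ^ n / 2 / (((n + 1 - q)! : ℕ) : ℚ)) *
            (gQ (n + 1 - q) w *
              ∏ j ∈ range (n + 1 - q - w), (4 * (k : ℚ) - i - 1 + 2 * j)) := by
      intro M hM
      apply Finset.sum_subset (Finset.range_subset_range.2 hM)
      intro w hw hnw
      rw [mem_range] at hw hnw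
      exact hzero w (by omega)
    rw [← key ((n + 2) / 2) (by omega), key (n + 1 - q + 1) (by omega)]
    have pull : ∑ w ∈ range (n + 1 - q + 1),
          (((k - i).choose (q - 1) : ℕ) : ℚ) *
            ((-1 : ℚ) ^ (q + 1) * (2 : ℚ) ^ n / 2 / (((n + 1 - q)! : ℕ) : ℚ)) *
            (gQ (n + 1 - q) w *
              ∏ j ∈ range (n + 1 - q - w), (4 * (k : ℚ) - i - 1 + 2 * j))
        = (((k - i).choose (q - 1) : ℕ) : ℚ) *
            ((-1 : ℚ) ^ (q + 1) * (2 : ℚ) ^ n / 2 / (((n + 1 - q)! : ℕ) : ℚ)) *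
            ∑ w ∈ range (n + 1 - q + 1),
              gQ (n + 1 - q) w *
                ∏ j ∈ range (n + 1 - q - w), (4 * (k : ℚ) - i - 1 + 2 * j) := by
      rw [Finset.mul_sum]
    rw [pull, lemA (n + 1 - q) (4 * (k : ℚ) - i - 1)]
  rw [Finset.sum_congr rfl inner]
  -- Step 5: the outer sum over q
  rw [show Finset.Icc 1 (n + 1) = Finset.Ico 1 (n + 2) from (Finset.Ico_add_one_right_eq_Icc (a := 1) (b := n + 1)).symm]
  rw [Finset.sum_Ico_eq_sum_range]
  rw [show n + 2 - 1 = n + 1 from by omega]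
  have houter : ∀ u ∈ range (n + 1),
      (((k - i).choose (1 + u - 1) : ℕ) : ℚ) *
          ((-1 : ℚ) ^ ((1 + u) + 1) * (2 : ℚ) ^ n / 2 / (((n + 1 - (1 + u))! : ℕ) : ℚ)) *
          ∏ t ∈ range (n + 1 - (1 + u)), (4 * (k : ℚ) - i - 1 + t)
      = (2 : ℚ) ^ n / 2 *
          ((-1 : ℚ) ^ u * ((k - i).choose u : ℚ) *
            (((3 * k - 2 + (k - i) + n - u).choose (n - u) : ℕ) : ℚ)) := by
    intro u hu
    rw [mem_range] at hu
    rw [show 1 + u - 1 = u from by omega, show n + 1 - (1 + u) = n - u from by omega]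
    have hprod : ∏ t ∈ range (n - u), (4 * (k : ℚ) - i - 1 + t)
        = (((4 * k - 2 - i + (n - u)).choose (n - u) : ℕ) : ℚ) * (((n - u)! : ℕ) : ℚ) := by
      rw [← prod_cast_choose (4 * k - 2 - i) (n - u)]
      apply Finset.prod_congr rfl
      intro t _
      push_cast [Nat.cast_sub (show 2 ≤ 4 * k by omega),
        Nat.cast_sub (show i ≤ 4 * k - 2 by omega)]
      ring
    rw [hprod]
    rw [show 4 * k - 2 - i + (n - u) = 3 * k - 2 + (k - i) + n - u from by omega]
    have hf : (((n - u)! : ℕ) : ℚ) ≠ 0 := by exact_mod_cast (Nat.factorial_pos _).ne'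
    field_simp
    ring
  rw [Finset.sum_congr rfl houter, ← Finset.mul_sum, lemB (k - i) n (3 * k - 2)]
  rw [show 3 * k - 2 + n = n + 3 * k - 2 from by omega]
  rw [zpow_sub₀ (by norm_num : (2 : ℚ) ≠ 0), zpow_natCast, zpow_one]
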